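/- For any X ⪰ 0 the first iterate of the Riccati recursion with a factored initial condition satisfies: CᵀC + AᵀΓᵀΓ(I + BBᵀΓᵀΓ)⁻¹A = [C; ΓA]ᵀ (I + [0; ΓB][0; ΓB]ᵀ)⁻¹ [C; ΓA], where [C; ΓA] denotes vertical stacking. -/

import Mathlib

open Matrix

theorem stmt_10 {n m l r : ℕ}
    (A : Matrix (Fin n) (Fin n) ℝ) (B : Matrix (Fin n) (Fin m) ℝ)
    (C : Matrix (Fin l) (Fin n) ℝ) (Γ : Matrix (Fin r) (Fin n) ℝ) :
    Cᵀ * C + Aᵀ * (Γᵀ * Γ) * (1 + B * Bᵀ * (Γᵀ * Γ))⁻¹ * A =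
      (fromRows C (Γ * A))ᵀ *
        (1 + (fromRows (0 : Matrix (Fin l) (Fin m) ℝ) (Γ * B)) *
          (fromRows (0 : Matrix (Fin l) (Fin m) ℝ) (Γ * B))ᵀ)⁻¹ *
        fromRows C (Γ * A) := by
  have hpd : (1 + (Γ * B) * (Γ * B)ᵀ).PosDef := by
    have h1 : (1 : Matrix (Fin r) (Fin r) ℝ).PosDef := Matrix.PosDef.one
    have h2 : ((Γ * B) * (Γ * B)ᵀ).PosSemidef := by
      simpa using Matrix.posSemidef_self_mul_conjTranspose (Γ * B)
    exact h1.add_posSemidef h2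
  have hWdet : IsUnit (1 + (Γ * B) * (Γ * B)ᵀ).det :=
    (Matrix.isUnit_iff_isUnit_det _).1 hpd.isUnit
  have hMM : 1 + (Γ * B) * (Γ * B)ᵀ = 1 + Γ * (B * Bᵀ * Γᵀ) := by
    simp [Matrix.transpose_mul, Matrix.mul_assoc]
  have hdet : IsUnit (1 + B * Bᵀ * (Γᵀ * Γ)).det := by
    have h1 : 1 + B * Bᵀ * (Γᵀ * Γ) = 1 + (B * Bᵀ * Γᵀ) * Γ := by
      simp [Matrix.mul_assoc]
    rw [h1, Matrix.det_one_add_mul_comm, ← hMM]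
    exact hWdet
  have comm : (1 + (Γ * B) * (Γ * B)ᵀ) * Γ = Γ * (1 + B * Bᵀ * (Γᵀ * Γ)) := by
    rw [hMM]
    simp [Matrix.add_mul, Matrix.mul_add, Matrix.mul_assoc]
  have key : Γ * (1 + B * Bᵀ * (Γᵀ * Γ))⁻¹ = (1 + (Γ * B) * (Γ * B)ᵀ)⁻¹ * Γ := by
    have h2 : (1 + (Γ * B) * (Γ * B)ᵀ)⁻¹ * ((1 + (Γ * B) * (Γ * B)ᵀ) * Γ) *
        (1 + B * Bᵀ * (Γᵀ * Γ))⁻¹ =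
        (1 + (Γ * B) * (Γ * B)ᵀ)⁻¹ * (Γ * (1 + B * Bᵀ * (Γᵀ * Γ))) *
        (1 + B * Bᵀ * (Γᵀ * Γ))⁻¹ := by rw [comm]
    rwa [← Matrix.mul_assoc ((1 + (Γ * B) * (Γ * B)ᵀ)⁻¹) (1 + (Γ * B) * (Γ * B)ᵀ) Γ,
      Matrix.nonsing_inv_mul _ hWdet, Matrix.one_mul,
      ← Matrix.mul_assoc ((1 + (Γ * B) * (Γ * B)ᵀ)⁻¹) Γ (1 + B * Bᵀ * (Γᵀ * Γ)),
      Matrix.mul_assoc ((1 + (Γ * B) * (Γ * B)ᵀ)⁻¹ * Γ) (1 + B * Bᵀ * (Γᵀ * Γ))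
        ((1 + B * Bᵀ * (Γᵀ * Γ))⁻¹),
      Matrix.mul_nonsing_inv _ hdet, Matrix.mul_one] at h2
  have hblock : (1 + (fromRows (0 : Matrix (Fin l) (Fin m) ℝ) (Γ * B)) *
      (fromRows (0 : Matrix (Fin l) (Fin m) ℝ) (Γ * B))ᵀ)⁻¹ =
      fromBlocks 1 0 0 (1 + (Γ * B) * (Γ * B)ᵀ)⁻¹ := by
    have hP : (1 + (fromRows (0 : Matrix (Fin l) (Fin m) ℝ) (Γ * B)) *
        (fromRows (0 : Matrix (Fin l) (Fin m) ℝ) (Γ * B))ᵀ) =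
        fromBlocks 1 0 0 (1 + (Γ * B) * (Γ * B)ᵀ) := by
      rw [Matrix.transpose_fromRows, Matrix.fromRows_mul_fromCols]
      simp [← Matrix.fromBlocks_one, Matrix.fromBlocks_add]
    rw [hP]
    apply Matrix.inv_eq_right_inv
    rw [Matrix.fromBlocks_multiply]
    simp only [Matrix.one_mul, Matrix.mul_zero, Matrix.zero_mul, Matrix.mul_one,
      add_zero, zero_add, Matrix.mul_nonsing_inv _ hWdet, ← Matrix.fromBlocks_one]
  rw [hblock, Matrix.transpose_fromRows, Matrix.fromCols_mul_fromBlocks,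
    Matrix.fromCols_mul_fromRows]
  simp only [Matrix.mul_zero, Matrix.zero_mul, Matrix.mul_one, add_zero, zero_add,
    Matrix.transpose_mul]
  congr 1
  have hkey' : Γ * ((1 + B * Bᵀ * (Γᵀ * Γ))⁻¹ * A) =
      (1 + (Γ * B) * (Γ * B)ᵀ)⁻¹ * (Γ * A) := by
    rw [← Matrix.mul_assoc, key, Matrix.mul_assoc]
  simp only [Matrix.mul_assoc] at hkey' ⊢
  rw [hkey']
  simp only [Matrix.transpose_mul, Matrix.mul_assoc]
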